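/- In Setting (V), assume additionally: ψ(a+b) ≤ C_ψ·(ψ(a) + ψ(b)) for all a, b ≥ 0 with C_ψ ≥ 1; R(r̂) := Ř((I−P)(r⁻¹(r̂))) + R_P(P(r⁻¹(r̂))) with R_P(0) = 0 and R_P(v) ≥ γ·ψ(C_P·‖v‖^p) for all v, where γ > C_ψ and C_P ≥ 2^{p−1}·‖K‖^p·L_r^p; and Q(r(x†), r̂)^p ≤ C̃_Q·(Δ_ξ((I−P)(r⁻¹(r̂)), x†) + ψ(C_P·‖P(r⁻¹(r̂))‖^p)) for all r̂ ∈ X̃. Fix α, β > 0 and η ≥ 0 with η ≤ C_η·δ^p, and let (r̂_sm, x_sm) ∈ X̃ × U satisfy J_α(r̂_sm) ≤ J_α(r(x†)) + η and J_β(r̂_sm, x_sm) ≤ J_β(r̂_sm, x†) + η, where J_α(r̂) := ‖K r̂ + F(x₀) − y^δ‖^p + α·R(r̂) and J_β(r̂, x) := β·Q(r(x), r̂)^p + ‖P(x)‖^p. Then, with c̲ := min{1−b, γ−C_ψ}/(2C̃_Q), err := (min{1−b, γ−C_ψ}/(2C_ψ))·(Δ_ξ((I−P)(r⁻¹(r̂_sm)),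 x†) + ψ(C_P·‖P(r⁻¹(r̂_sm))‖^p)) + (c̲/C_ψ)·(Q(r(x_sm), r̂_sm)^p + (1/β)·‖P(x_sm)‖^p), res := (2^{1−p}/C_ψ)·‖K(r̂_sm − r(x†))‖^p, and C̄ := 2^{2p−2}·C_ψ, the inequality res + α·err ≤ ((2 + C_η + (α/β)·c̲·C_η)/C_ψ)·δ^p + α·ψ(C̄·res) holds. -/

import Mathlib

private lemma aux_rpow_add (p : ℝ) (hp : 1 ≤ p) {a c : ℝ} (ha : 0 ≤ a) (hc : 0 ≤ c) :
    (a + c) ^ p ≤ 2 ^ (p - 1) * (a ^ p + c ^ p) := by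
  have h := NNReal.rpow_add_le_mul_rpow_add_rpow ⟨a, ha⟩ ⟨c, hc⟩ hp
  have h2 := NNReal.coe_le_coe.2 h
  push_cast at h2
  convert h2 using 2
  all_goals rfl

set_option maxHeartbeats 1000000 in
/-- The central minimality estimate for split minimization (proof of Theorem 2.5):
comparison with the exact solution yields
`res + α·err ≤ ((2 + C_η + (α/β)·c̲·C_η)/C_ψ)·δ^p + α·ψ(C̄·res)`. -/
theorem stmt_8
    (p : ℝ) (hp : 1 ≤ p) (b : ℝ) (hb0 : 0 < b) (hb1 : b < 1)
    {X Xt Y : Type*} [NormedAddCommGroup X] [NormedSpace ℝ X]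
    [NormedAddCommGroup Xt] [NormedSpace ℝ Xt]
    [NormedAddCommGroup Y] [NormedSpace ℝ Y]
    (Xc : Submodule ℝ X) (U : Set X) (x0 xd : X)
    (hx0U : x0 ∈ U) (hx0c : x0 ∈ Xc) (hxdU : xd ∈ U) (hxdc : xd ∈ Xc)
    (F : X → Y) (K : Xt →L[ℝ] Y)
    (r : X → Xt) (rinv : Xt → X)
    (hrleft : ∀ x ∈ U, rinv (r x) = x)
    (hrmem : ∀ v : Xt, rinv v ∈ U) (hrright : ∀ v : Xt, r (rinv v) = v)
    (Lr : ℝ) (hLr : ∀ x1 ∈ U, ∀ x2 ∈ U, ‖r x1 - r x2‖ ≤ Lr * ‖x1 - x2‖)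
    (hRI : ∀ x ∈ U, F x - F x0 = K (r x))
    (P Ip : X → X) (hPIp : ∀ x, P x = x - Ip x)
    (hIpXc : ∀ x, Ip x ∈ Xc)
    (hPxd : P xd = 0) (hPx0 : P x0 = 0)
    (hIprinvU : ∀ v : Xt, Ip (rinv v) ∈ U)
    (δ : ℝ) (hδ : 0 < δ) (yδ : Y) (hnoise : ‖F xd - yδ‖ ≤ δ)
    (Rc : X → ℝ) (hRcnn : ∀ x, 0 ≤ Rc x)
    (ξ : X →L[ℝ] ℝ) (hξ : ∀ xc ∈ Xc, ξ (xc - xd) ≤ Rc xc - Rc xd)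
    (ψ : ℝ → ℝ) (hψcont : ContinuousOn ψ (Set.Ici (0 : ℝ)))
    (hψmono : MonotoneOn ψ (Set.Ici (0 : ℝ)))
    (hψ0 : ψ 0 = 0) (hψnn : ∀ t : ℝ, 0 ≤ t → 0 ≤ ψ t)
    (hVSC : ∀ xc, xc ∈ Xc → xc ∈ U →
      -(ξ (xc - xd)) ≤ b * (Rc xc - Rc xd - ξ (xc - xd)) + ψ (‖K (r xc - r xd)‖ ^ p))
    (Q : Xt → Xt → ℝ) (hQnn : ∀ v1 v2, 0 ≤ Q v1 v2) (hQdiag : ∀ v, Q v v = 0)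
    (Cψ : ℝ) (hCψ : 1 ≤ Cψ)
    (hψsub : ∀ a c : ℝ, 0 ≤ a → 0 ≤ c → ψ (a + c) ≤ Cψ * (ψ a + ψ c))
    (RP : X → ℝ) (hRP0 : RP 0 = 0) (hRPnn : ∀ v, 0 ≤ RP v)
    (γ CP : ℝ) (hγ : Cψ < γ)
    (hCP : (2 : ℝ) ^ (p - 1) * ‖K‖ ^ p * Lr ^ p ≤ CP)
    (hRPlb : ∀ v : X, γ * ψ (CP * ‖v‖ ^ p) ≤ RP v)
    (CtQ : ℝ) (hCtQ : 0 < CtQ)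
    (hQt : ∀ v : Xt, Q (r xd) v ^ p ≤
      CtQ * ((Rc (Ip (rinv v)) - Rc xd - ξ (Ip (rinv v) - xd)) + ψ (CP * ‖P (rinv v)‖ ^ p)))
    (α β : ℝ) (hα : 0 < α) (hβ : 0 < β)
    (Cη η : ℝ) (hCη : 0 < Cη) (hη0 : 0 ≤ η) (hη : η ≤ Cη * δ ^ p)
    (Jα : Xt → ℝ)
    (hJα : ∀ v, Jα v = ‖K v + F x0 - yδ‖ ^ p +
      α * (Rc (Ip (rinv v)) + RP (P (rinv v))))
    (Jβ : Xt → X → ℝ)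
    (hJβ : ∀ v x, Jβ v x = β * Q (r x) v ^ p + ‖P x‖ ^ p)
    (rsm : Xt) (xsm : X) (hxsmU : xsm ∈ U)
    (hmin1 : Jα rsm ≤ Jα (r xd) + η)
    (hmin2 : Jβ rsm xsm ≤ Jβ rsm xd + η)
    (cl err res Cb : ℝ)
    (hcl : cl = min (1 - b) (γ - Cψ) / (2 * CtQ))
    (herr : err = (min (1 - b) (γ - Cψ) / (2 * Cψ)) *
        ((Rc (Ip (rinv rsm)) - Rc xd - ξ (Ip (rinv rsm) - xd)) +
          ψ (CP * ‖P (rinv rsm)‖ ^ p)) +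
      (cl / Cψ) * (Q (r xsm) rsm ^ p + (1 / β) * ‖P xsm‖ ^ p))
    (hres : res = ((2 : ℝ) ^ (1 - p) / Cψ) * ‖K (rsm - r xd)‖ ^ p)
    (hCb : Cb = (2 : ℝ) ^ (2 * p - 2) * Cψ) :
    res + α * err ≤ ((2 + Cη + (α / β) * cl * Cη) / Cψ) * δ ^ p + α * ψ (Cb * res) := by
  have hp0 : (0 : ℝ) < p := lt_of_lt_of_le one_pos hp
  have hpne : p ≠ 0 := ne_of_gt hp0
  have hCψ0 : (0 : ℝ) < Cψ := lt_of_lt_of_le one_pos hCψ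
  have hCψne : Cψ ≠ 0 := ne_of_gt hCψ0
  have htwo : (0 : ℝ) < 2 := by norm_num
  have hm0 : (0 : ℝ) < min (1 - b) (γ - Cψ) := lt_min (by linarith) (by linarith)
  have hclnn : 0 ≤ cl := by
    rw [hcl]; exact div_nonneg hm0.le (by linarith)
  -- Bregman distance is nonnegative
  have hΔ0 : 0 ≤ Rc (Ip (rinv rsm)) - Rc xd - ξ (Ip (rinv rsm) - xd) := by
    have h := hξ (Ip (rinv rsm)) (hIpXc (rinv rsm))
    linarith
  -- Cb * res = 2^(p-1) * ‖K (rsm - r xd)‖^p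
  have hCbres : Cb * res = 2 ^ (p - 1) * ‖K (rsm - r xd)‖ ^ p := by
    rw [hCb, hres]
    have h2 : (2 : ℝ) ^ (2 * p - 2) * (2 : ℝ) ^ (1 - p) = 2 ^ (p - 1) := by
      rw [← Real.rpow_add htwo]; ring_nf
    calc (2 : ℝ) ^ (2 * p - 2) * Cψ * ((2 : ℝ) ^ (1 - p) / Cψ * ‖K (rsm - r xd)‖ ^ p)
        = ((2 : ℝ) ^ (2 * p - 2) * (2 : ℝ) ^ (1 - p)) * ‖K (rsm - r xd)‖ ^ p * (Cψ / Cψ) := by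
          ring
      _ = 2 ^ (p - 1) * ‖K (rsm - r xd)‖ ^ p := by
          rw [div_self hCψne, h2, mul_one]
  have hCbresnn : 0 ≤ Cb * res := by
    rw [hCbres]
    exact mul_nonneg (Real.rpow_nonneg (by norm_num) _) (Real.rpow_nonneg (norm_nonneg _) _)
  have hψCbnn : 0 ≤ ψ (Cb * res) := hψnn _ hCbresnn
  -- key estimate on ψ of the linearized residual at Ip (rinv rsm), and CP ≥ 0
  obtain ⟨hCPnn, hL1⟩ : 0 ≤ CP ∧
      ψ (‖K (r (Ip (rinv rsm)) - r xd)‖ ^ p) ≤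
        Cψ * (ψ (CP * ‖P (rinv rsm)‖ ^ p) + ψ (Cb * res)) := by
    rcases le_or_gt 0 Lr with hLr0 | hLr0
    · -- Lipschitz constant nonnegative: the generic case
      have hCPnn : 0 ≤ CP := by
        refine le_trans ?_ hCP
        exact mul_nonneg (mul_nonneg (Real.rpow_nonneg (by norm_num) _)
          (Real.rpow_nonneg (norm_nonneg _) _)) (Real.rpow_nonneg hLr0 _)
      refine ⟨hCPnn, ?_⟩
      have hru : r (rinv rsm) = rsm := hrright rsm
      have hnorm : ‖Ip (rinv rsm) - rinv rsm‖ = ‖P (rinv rsm)‖ := by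
        rw [hPIp (rinv rsm), norm_sub_rev]
      have hLr' : ‖r (Ip (rinv rsm)) - rsm‖ ≤ Lr * ‖P (rinv rsm)‖ := by
        have h := hLr (Ip (rinv rsm)) (hIprinvU rsm) (rinv rsm) (hrmem rsm)
        rw [hru, hnorm] at h
        exact h
      have hB0 : 0 ≤ ‖K‖ * (Lr * ‖P (rinv rsm)‖) :=
        mul_nonneg (norm_nonneg _) (mul_nonneg hLr0 (norm_nonneg _))
      have h2 : ‖K (r (Ip (rinv rsm)) - rsm)‖ ≤ ‖K‖ * (Lr * ‖P (rinv rsm)‖) := by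
        calc ‖K (r (Ip (rinv rsm)) - rsm)‖ ≤ ‖K‖ * ‖r (Ip (rinv rsm)) - rsm‖ :=
              K.le_opNorm _
          _ ≤ ‖K‖ * (Lr * ‖P (rinv rsm)‖) :=
              mul_le_mul_of_nonneg_left hLr' (norm_nonneg K)
      have hsplit : K (r (Ip (rinv rsm)) - r xd) =
          K (r (Ip (rinv rsm)) - rsm) + K (rsm - r xd) := by
        rw [← map_add]; congr 1; abel
      have h1 : ‖K (r (Ip (rinv rsm)) - r xd)‖ ≤
          ‖K‖ * (Lr * ‖P (rinv rsm)‖) + ‖K (rsm - r xd)‖ := by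
        rw [hsplit]
        refine le_trans (norm_add_le _ _) ?_
        linarith [h2]
      have h3 : ‖K (r (Ip (rinv rsm)) - r xd)‖ ^ p ≤
          (‖K‖ * (Lr * ‖P (rinv rsm)‖) + ‖K (rsm - r xd)‖) ^ p :=
        Real.rpow_le_rpow (norm_nonneg _) h1 hp0.le
      have h4 := aux_rpow_add p hp hB0 (norm_nonneg (K (rsm - r xd)))
      have hBp : (‖K‖ * (Lr * ‖P (rinv rsm)‖)) ^ p =
          ‖K‖ ^ p * (Lr ^ p * ‖P (rinv rsm)‖ ^ p) := by
        rw [Real.mul_rpow (norm_nonneg K) (mul_nonneg hLr0 (norm_nonneg _)),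
          Real.mul_rpow hLr0 (norm_nonneg _)]
      have h5 : 2 ^ (p - 1) * (‖K‖ * (Lr * ‖P (rinv rsm)‖)) ^ p ≤
          CP * ‖P (rinv rsm)‖ ^ p := by
        rw [hBp]
        calc 2 ^ (p - 1) * (‖K‖ ^ p * (Lr ^ p * ‖P (rinv rsm)‖ ^ p))
            = (2 ^ (p - 1) * ‖K‖ ^ p * Lr ^ p) * ‖P (rinv rsm)‖ ^ p := by ring
          _ ≤ CP * ‖P (rinv rsm)‖ ^ p :=
            mul_le_mul_of_nonneg_right hCP (Real.rpow_nonneg (norm_nonneg _) _)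
      have harg1 : 0 ≤ 2 ^ (p - 1) * (‖K‖ * (Lr * ‖P (rinv rsm)‖)) ^ p :=
        mul_nonneg (Real.rpow_nonneg (by norm_num) _) (Real.rpow_nonneg hB0 _)
      have harg2 : 0 ≤ 2 ^ (p - 1) * ‖K (rsm - r xd)‖ ^ p :=
        mul_nonneg (Real.rpow_nonneg (by norm_num) _) (Real.rpow_nonneg (norm_nonneg _) _)
      have h6 : ψ (‖K (r (Ip (rinv rsm)) - r xd)‖ ^ p) ≤
          ψ (2 ^ (p - 1) * (‖K‖ * (Lr * ‖P (rinv rsm)‖)) ^ p +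
            2 ^ (p - 1) * ‖K (rsm - r xd)‖ ^ p) := by
        refine hψmono (Set.mem_Ici.2 (Real.rpow_nonneg (norm_nonneg _) _))
          (Set.mem_Ici.2 (add_nonneg harg1 harg2)) ?_
        calc ‖K (r (Ip (rinv rsm)) - r xd)‖ ^ p
            ≤ (‖K‖ * (Lr * ‖P (rinv rsm)‖) + ‖K (rsm - r xd)‖) ^ p := h3
          _ ≤ 2 ^ (p - 1) * ((‖K‖ * (Lr * ‖P (rinv rsm)‖)) ^ p +
              ‖K (rsm - r xd)‖ ^ p) := h4
          _ = 2 ^ (p - 1) * (‖K‖ * (Lr * ‖P (rinv rsm)‖)) ^ p +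
              2 ^ (p - 1) * ‖K (rsm - r xd)‖ ^ p := by ring
      have h7 := hψsub _ _ harg1 harg2
      have h8 : ψ (2 ^ (p - 1) * (‖K‖ * (Lr * ‖P (rinv rsm)‖)) ^ p) ≤
          ψ (CP * ‖P (rinv rsm)‖ ^ p) :=
        hψmono (Set.mem_Ici.2 harg1)
          (Set.mem_Ici.2 (mul_nonneg hCPnn (Real.rpow_nonneg (norm_nonneg _) _))) h5
      have h9 : ψ (2 ^ (p - 1) * ‖K (rsm - r xd)‖ ^ p) = ψ (Cb * res) := by
        rw [hCbres]
      have h10 : Cψ * (ψ (2 ^ (p - 1) * (‖K‖ * (Lr * ‖P (rinv rsm)‖)) ^ p) +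
          ψ (2 ^ (p - 1) * ‖K (rsm - r xd)‖ ^ p)) ≤
          Cψ * (ψ (CP * ‖P (rinv rsm)‖ ^ p) + ψ (Cb * res)) := by
        refine mul_le_mul_of_nonneg_left ?_ hCψ0.le
        rw [h9]
        linarith [h8]
      linarith [h6, h7, h10]
    · -- Lr < 0 : then Xt is a subsingleton and K = 0
      have hsub : ∀ v1 v2 : Xt, v1 = v2 := by
        intro v1 v2
        have h := hLr (rinv v1) (hrmem v1) (rinv v2) (hrmem v2)
        rw [hrright v1, hrright v2] at h
        have h2 : Lr * ‖rinv v1 - rinv v2‖ ≤ 0 * ‖rinv v1 - rinv v2‖ :=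
          mul_le_mul_of_nonneg_right hLr0.le (norm_nonneg _)
        have h3 : ‖v1 - v2‖ ≤ 0 := by
          refine le_trans h ?_; linarith
        have h4 : v1 - v2 = 0 := norm_le_zero_iff.mp h3
        exact sub_eq_zero.mp h4
      have hK0 : ‖K‖ = 0 := by
        have hKz : K = 0 := by
          ext v
          rw [hsub v 0]
          simp
        rw [hKz]
        simp
      have hCPnn : 0 ≤ CP := by
        refine le_trans ?_ hCP
        rw [hK0, Real.zero_rpow hpne]
        simp
      refine ⟨hCPnn, ?_⟩
      have hKz : K (r (Ip (rinv rsm)) - r xd) = 0 := by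
        rw [hsub (r (Ip (rinv rsm))) (r xd)]
        simp
      rw [hKz, norm_zero, Real.zero_rpow hpne, hψ0]
      have hAnn : 0 ≤ ψ (CP * ‖P (rinv rsm)‖ ^ p) :=
        hψnn _ (mul_nonneg hCPnn (Real.rpow_nonneg (norm_nonneg _) _))
      exact mul_nonneg hCψ0.le (add_nonneg hAnn hψCbnn)
  have hAnn : 0 ≤ ψ (CP * ‖P (rinv rsm)‖ ^ p) :=
    hψnn _ (mul_nonneg hCPnn (Real.rpow_nonneg (norm_nonneg _) _))
  -- first minimality, rewritten
  have hIpxd : Ip xd = xd := by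
    have h := hPIp xd
    rw [hPxd] at h
    exact (sub_eq_zero.mp h.symm).symm
  have hKxd : K (r xd) + F x0 - yδ = F xd - yδ := by
    have h := hRI xd hxdU
    rw [← h]; abel
  have hJ1 : ‖K rsm + F x0 - yδ‖ ^ p + α * Rc (Ip (rinv rsm)) + α * RP (P (rinv rsm)) ≤
      δ ^ p + α * Rc xd + η := by
    have e1 := hmin1
    rw [hJα rsm, hJα (r xd), hrleft xd hxdU, hIpxd, hPxd, hRP0, hKxd] at e1
    have hnd : ‖F xd - yδ‖ ^ p ≤ δ ^ p :=
      Real.rpow_le_rpow (norm_nonneg _) hnoise hp0.le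
    linarith [e1, hnd]
  -- combine with VSC and the lower bound on RP
  have hVSCx := hVSC (Ip (rinv rsm)) (hIpXc (rinv rsm)) (hIprinvU rsm)
  have key : ‖K rsm + F x0 - yδ‖ ^ p +
      α * (min (1 - b) (γ - Cψ) *
        ((Rc (Ip (rinv rsm)) - Rc xd - ξ (Ip (rinv rsm) - xd)) +
          ψ (CP * ‖P (rinv rsm)‖ ^ p))) ≤
      δ ^ p + η + α * (Cψ * ψ (Cb * res)) := by
    have q1 : -(ξ (Ip (rinv rsm) - xd)) ≤
        b * (Rc (Ip (rinv rsm)) - Rc xd - ξ (Ip (rinv rsm) - xd)) +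
          Cψ * ψ (CP * ‖P (rinv rsm)‖ ^ p) + Cψ * ψ (Cb * res) := by
      linarith [hVSCx, hL1]
    have q2 := mul_le_mul_of_nonneg_left q1 hα.le
    have q3 := mul_le_mul_of_nonneg_left (hRPlb (P (rinv rsm))) hα.le
    have qΔ : α * (min (1 - b) (γ - Cψ) *
        (Rc (Ip (rinv rsm)) - Rc xd - ξ (Ip (rinv rsm) - xd))) ≤
        α * ((1 - b) * (Rc (Ip (rinv rsm)) - Rc xd - ξ (Ip (rinv rsm) - xd))) :=
      mul_le_mul_of_nonneg_left (mul_le_mul_of_nonneg_right (min_le_left _ _) hΔ0) hα.le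
    have qA : α * (min (1 - b) (γ - Cψ) * ψ (CP * ‖P (rinv rsm)‖ ^ p)) ≤
        α * ((γ - Cψ) * ψ (CP * ‖P (rinv rsm)‖ ^ p)) :=
      mul_le_mul_of_nonneg_left (mul_le_mul_of_nonneg_right (min_le_right _ _) hAnn) hα.le
    linarith [hJ1, q2, q3, qΔ, qA]
  -- second minimality, rewritten
  have hK2 : β * Q (r xsm) rsm ^ p + ‖P xsm‖ ^ p ≤
      β * (CtQ * ((Rc (Ip (rinv rsm)) - Rc xd - ξ (Ip (rinv rsm) - xd)) +
        ψ (CP * ‖P (rinv rsm)‖ ^ p))) + η := by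
    have e2 := hmin2
    rw [hJβ rsm xsm, hJβ rsm xd, hPxd, norm_zero, Real.zero_rpow hpne] at e2
    have h := mul_le_mul_of_nonneg_left (hQt rsm) hβ.le
    linarith [e2, h]
  have hK2' : Q (r xsm) rsm ^ p + (1 / β) * ‖P xsm‖ ^ p ≤
      CtQ * ((Rc (Ip (rinv rsm)) - Rc xd - ξ (Ip (rinv rsm) - xd)) +
        ψ (CP * ‖P (rinv rsm)‖ ^ p)) + (1 / β) * η := by
    rw [← mul_le_mul_iff_right₀ hβ]
    have hL : β * (Q (r xsm) rsm ^ p + 1 / β * ‖P xsm‖ ^ p) =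
        β * Q (r xsm) rsm ^ p + ‖P xsm‖ ^ p := by
      field_simp
      try ring
    have hR : β * (CtQ * ((Rc (Ip (rinv rsm)) - Rc xd - ξ (Ip (rinv rsm) - xd)) +
        ψ (CP * ‖P (rinv rsm)‖ ^ p)) + 1 / β * η) =
        β * (CtQ * ((Rc (Ip (rinv rsm)) - Rc xd - ξ (Ip (rinv rsm) - xd)) +
        ψ (CP * ‖P (rinv rsm)‖ ^ p))) + η := by
      field_simp
      try ring
    rw [hL, hR]
    exact hK2
  -- bound on err
  have hclCψnn : 0 ≤ cl / Cψ := div_nonneg hclnn hCψ0.le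
  have hK2'' := mul_le_mul_of_nonneg_left hK2' hclCψnn
  have hE : (cl / Cψ) * (CtQ * ((Rc (Ip (rinv rsm)) - Rc xd - ξ (Ip (rinv rsm) - xd)) +
      ψ (CP * ‖P (rinv rsm)‖ ^ p)) + (1 / β) * η) =
      (min (1 - b) (γ - Cψ) / (2 * Cψ)) *
        ((Rc (Ip (rinv rsm)) - Rc xd - ξ (Ip (rinv rsm) - xd)) +
          ψ (CP * ‖P (rinv rsm)‖ ^ p)) + (cl / Cψ) * ((1 / β) * η) := by
    rw [hcl]
    field_simp
  have herrb : err ≤ (min (1 - b) (γ - Cψ) / (2 * Cψ)) *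
      ((Rc (Ip (rinv rsm)) - Rc xd - ξ (Ip (rinv rsm) - xd)) +
        ψ (CP * ‖P (rinv rsm)‖ ^ p)) +
      (min (1 - b) (γ - Cψ) / (2 * Cψ)) *
      ((Rc (Ip (rinv rsm)) - Rc xd - ξ (Ip (rinv rsm) - xd)) +
        ψ (CP * ‖P (rinv rsm)‖ ^ p)) + (cl / Cψ) * ((1 / β) * η) := by
    rw [herr]
    linarith [hK2'', hE]
  have hαerrb := mul_le_mul_of_nonneg_left herrb hα.le
  -- bound on res
  have hK3 : Cψ * res ≤ ‖K rsm + F x0 - yδ‖ ^ p + δ ^ p := by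
    rw [hres]
    have hcc : Cψ * ((2 : ℝ) ^ (1 - p) / Cψ * ‖K (rsm - r xd)‖ ^ p) =
        (2 : ℝ) ^ (1 - p) * ‖K (rsm - r xd)‖ ^ p := by
      field_simp
    rw [hcc]
    have hKsplit : K (rsm - r xd) = (K rsm + F x0 - yδ) - (F xd - yδ) := by
      rw [map_sub]
      have h := hRI xd hxdU
      rw [← h]; abel
    have hcle : ‖K (rsm - r xd)‖ ≤ ‖K rsm + F x0 - yδ‖ + δ := by
      rw [hKsplit]
      refine le_trans (norm_sub_le _ _) ?_
      linarith [hnoise]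
    have h10 : ‖K (rsm - r xd)‖ ^ p ≤
        2 ^ (p - 1) * (‖K rsm + F x0 - yδ‖ ^ p + δ ^ p) := by
      have ha := Real.rpow_le_rpow (norm_nonneg (K (rsm - r xd))) hcle hp0.le
      have hb2 := aux_rpow_add p hp (norm_nonneg (K rsm + F x0 - yδ)) hδ.le
      exact le_trans ha hb2
    have h11 : (2 : ℝ) ^ (1 - p) * ‖K (rsm - r xd)‖ ^ p ≤
        (2 : ℝ) ^ (1 - p) * (2 ^ (p - 1) * (‖K rsm + F x0 - yδ‖ ^ p + δ ^ p)) :=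
      mul_le_mul_of_nonneg_left h10 (Real.rpow_nonneg (by norm_num) _)
    have h12 : (2 : ℝ) ^ (1 - p) * (2 ^ (p - 1) * (‖K rsm + F x0 - yδ‖ ^ p + δ ^ p)) =
        ‖K rsm + F x0 - yδ‖ ^ p + δ ^ p := by
      rw [← mul_assoc, ← Real.rpow_add htwo]
      have : (1 - p) + (p - 1) = (0 : ℝ) := by ring
      rw [this, Real.rpow_zero, one_mul]
    linarith [h11, h12]
  -- divided forms
  have hK3' : res ≤ (1 / Cψ) * ‖K rsm + F x0 - yδ‖ ^ p + (1 / Cψ) * δ ^ p := by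
    rw [← mul_le_mul_iff_right₀ hCψ0]
    have hR : Cψ * ((1 / Cψ) * ‖K rsm + F x0 - yδ‖ ^ p + (1 / Cψ) * δ ^ p) =
        ‖K rsm + F x0 - yδ‖ ^ p + δ ^ p := by
      field_simp
    rw [hR]
    exact hK3
  have hK1' : (1 / Cψ) * ‖K rsm + F x0 - yδ‖ ^ p +
      (α * ((min (1 - b) (γ - Cψ) / (2 * Cψ)) *
        ((Rc (Ip (rinv rsm)) - Rc xd - ξ (Ip (rinv rsm) - xd)) +
          ψ (CP * ‖P (rinv rsm)‖ ^ p))) +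
       α * ((min (1 - b) (γ - Cψ) / (2 * Cψ)) *
        ((Rc (Ip (rinv rsm)) - Rc xd - ξ (Ip (rinv rsm) - xd)) +
          ψ (CP * ‖P (rinv rsm)‖ ^ p)))) ≤
      (1 / Cψ) * δ ^ p + (1 / Cψ) * η + α * ψ (Cb * res) := by
    rw [← mul_le_mul_iff_right₀ hCψ0]
    have hL : Cψ * ((1 / Cψ) * ‖K rsm + F x0 - yδ‖ ^ p +
        (α * ((min (1 - b) (γ - Cψ) / (2 * Cψ)) *
          ((Rc (Ip (rinv rsm)) - Rc xd - ξ (Ip (rinv rsm) - xd)) +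
            ψ (CP * ‖P (rinv rsm)‖ ^ p))) +
         α * ((min (1 - b) (γ - Cψ) / (2 * Cψ)) *
          ((Rc (Ip (rinv rsm)) - Rc xd - ξ (Ip (rinv rsm) - xd)) +
            ψ (CP * ‖P (rinv rsm)‖ ^ p))))) =
        ‖K rsm + F x0 - yδ‖ ^ p +
          α * (min (1 - b) (γ - Cψ) *
            ((Rc (Ip (rinv rsm)) - Rc xd - ξ (Ip (rinv rsm) - xd)) +
              ψ (CP * ‖P (rinv rsm)‖ ^ p))) := by
      field_simp
      ring
    have hR : Cψ * ((1 / Cψ) * δ ^ p + (1 / Cψ) * η + α * ψ (Cb * res)) =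
        δ ^ p + η + α * (Cψ * ψ (Cb * res)) := by
      field_simp
    rw [hL, hR]
    exact key
  -- final assembly
  have hη1 : (1 / Cψ) * η ≤ (1 / Cψ) * (Cη * δ ^ p) :=
    mul_le_mul_of_nonneg_left hη (by positivity)
  have hη2 : α * ((cl / Cψ) * ((1 / β) * η)) ≤ α * ((cl / Cψ) * ((1 / β) * (Cη * δ ^ p))) := by
    refine mul_le_mul_of_nonneg_left ?_ hα.le
    refine mul_le_mul_of_nonneg_left ?_ hclCψnn
    refine mul_le_mul_of_nonneg_left hη (by positivity)
  have hfin : ((2 + Cη + (α / β) * cl * Cη) / Cψ) * δ ^ p =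
      (1 / Cψ) * δ ^ p + (1 / Cψ) * δ ^ p + (1 / Cψ) * (Cη * δ ^ p) +
        α * ((cl / Cψ) * ((1 / β) * (Cη * δ ^ p))) := by
    field_simp
    ring
  linarith [hK3', hK1', hαerrb, hη1, hη2, hfin]
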